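/- Let $T$ be the dyadic shift ($T h_I = h_{I_+} - h_{I_-}$ for $I$ even, $0$ for odd) and let $b \in L^2_{loc}$. Define the paraproduct $D(b,f) = \sum_I \langle b \rangle_I (f, h_I) h_I$ where $\langle b \rangle_I = (b, \mathbf{1}_I/|I|)$. Then the commutator satisfies $T D(b, f) - D(b, T f) = \sum_{I \text{ odd}} \frac{-1}{|\hat I|^{1/2}} (b, h_{\hat I}) (f, h_{\hat I}) h_I$, where the sum runs over odd dyadic intervals $I$ and $\hat I$ is the parent of $I$. -/

import Mathlib

open MeasureTheory
open scoped Classical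

/-- A dyadic interval `[k·2^(-n), (k+1)·2^(-n))` on the real line, encoded by its
scale `n` (so that `|I| = 2^(-n)`) and its position `k`. -/
structure DI where
  n : ℤ
  k : ℤ

namespace DI

/-- The underlying half-open interval of a dyadic interval. -/
noncomputable def set (I : DI) : Set ℝ :=
  Set.Ico ((I.k : ℝ) * (2:ℝ) ^ (-I.n)) (((I.k : ℝ) + 1) * (2:ℝ) ^ (-I.n))

/-- The length `|I| = 2^(-n)` of a dyadic interval. -/
noncomputable def len (I : DI) : ℝ := (2:ℝ) ^ (-I.n)

/-- `I` is *even* when `|I| = 2^(-2k)` for an integer `k`. -/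
def IsEven (I : DI) : Prop := Even I.n

/-- The dyadic parent `Î` of `I`. -/
def parent (I : DI) : DI := ⟨I.n - 1, Int.ediv I.k 2⟩

/-- The left (lower) half `I₋` of `I`. -/
def left (I : DI) : DI := ⟨I.n + 1, 2 * I.k⟩

/-- The right (upper) half `I₊` of `I`. -/
def right (I : DI) : DI := ⟨I.n + 1, 2 * I.k + 1⟩

/-- The dyadic sibling of `I` (the other child of `Î`). -/
def sibling (I : DI) : DI := if I.k % 2 = 1 then ⟨I.n, I.k - 1⟩ else ⟨I.n, I.k + 1⟩

/-- `sgn (I, Î)`: equal to `+1` if `I = (Î)₊` (the right child) and `-1` if `I = (Î)₋`. -/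
noncomputable def sgn (I : DI) : ℝ := if I.k % 2 = 1 then 1 else -1

/-- Containment of dyadic intervals. -/
def Sub (I J : DI) : Prop := I.set ⊆ J.set

end DI

/-- The Haar function `h_I = |I|^{-1/2} (𝟏_{I₊} - 𝟏_{I₋})`. -/
noncomputable def haar (I : DI) : ℝ → ℝ := fun x =>
  Real.sqrt ((2:ℝ) ^ I.n) *
    (if x ∈ DI.set (DI.right I) then 1 else if x ∈ DI.set (DI.left I) then -1 else 0)

/-- The Haar coefficient `(f, h_I)`. -/
noncomputable def hcoef (f : ℝ → ℝ) (I : DI) : ℝ := ∫ x, f x * haar I x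

/-- The average `⟨f⟩_I = (f, 𝟏_I/|I|)`. -/
noncomputable def avg (f : ℝ → ℝ) (I : DI) : ℝ := (∫ x in DI.set I, f x) / DI.len I

/-- The normalized indicator `𝟏̃_I = 𝟏_I/|I|`. -/
noncomputable def nind (I : DI) : ℝ → ℝ := fun x => if x ∈ DI.set I then 1 / DI.len I else 0

/-- The dyadic shift `T`, with `T h_I = h_{I₊} - h_{I₋}` for `I` even and `T h_I = 0`
for `I` odd. -/
noncomputable def shift (f : ℝ → ℝ) : ℝ → ℝ := fun x =>
  ∑' I : DI, if DI.IsEven I then hcoef f I * (haar (DI.right I) x - haar (DI.left I) x) else 0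

/-- The adjoint dyadic shift `T*`, with `T* h_I = sgn(I, Î) h_{Î}` for `I` odd and
`T* h_I = 0` for `I` even. -/
noncomputable def shiftAdj (f : ℝ → ℝ) : ℝ → ℝ := fun x =>
  ∑' I : DI, if DI.IsEven I then 0 else hcoef f I * DI.sgn I * haar (DI.parent I) x

/-- The paraproduct `D(b, f) = ∑_I ⟨b⟩_I (f, h_I) h_I`. -/
noncomputable def Dpara (b f : ℝ → ℝ) : ℝ → ℝ := fun x =>
  ∑' I : DI, avg b I * hcoef f I * haar I x

/-- The dyadic shift `T₁` acting in the first variable. -/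
noncomputable def shift1 (F : ℝ × ℝ → ℝ) : ℝ × ℝ → ℝ := fun p => shift (fun x => F (x, p.2)) p.1

/-- The dyadic shift `T₂` acting in the second variable. -/
noncomputable def shift2 (F : ℝ × ℝ → ℝ) : ℝ × ℝ → ℝ := fun p => shift (fun y => F (p.1, y)) p.2

/-- The adjoint shift `T₁*` acting in the first variable. -/
noncomputable def shift1Adj (F : ℝ × ℝ → ℝ) : ℝ × ℝ → ℝ := fun p =>
  shiftAdj (fun x => F (x, p.2)) p.1

/-- The adjoint shift `T₂*` acting in the second variable. -/
noncomputable def shift2Adj (F : ℝ × ℝ → ℝ) : ℝ × ℝ → ℝ := fun p =>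
  shiftAdj (fun y => F (p.1, y)) p.2

/-- The repeated commutator `𝒯^b = [T₂,[T₁,b]] = T₂T₁b· − T₂ b T₁ − T₁ b T₂ + b T₁T₂`. -/
noncomputable def repComm (b F : ℝ × ℝ → ℝ) : ℝ × ℝ → ℝ := fun p =>
  shift2 (shift1 (fun q => b q * F q)) p - shift2 (fun q => b q * shift1 F q) p
    - shift1 (fun q => b q * shift2 F q) p + b p * shift1 (shift2 F) p

/-- The repeated commutator with the adjoint shifts, `𝒯^b_* = [T₂*,[T₁*,b]]`. -/
noncomputable def repCommAdj (b F : ℝ × ℝ → ℝ) : ℝ × ℝ → ℝ := fun p =>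
  shift2Adj (shift1Adj (fun q => b q * F q)) p - shift2Adj (fun q => b q * shift1Adj F q) p
    - shift1Adj (fun q => b q * shift2Adj F q) p + b p * shift1Adj (shift2Adj F) p

/-- The bi-parameter Haar coefficient `(b, h_I ⊗ h_J)`. -/
noncomputable def hcoef2 (b : ℝ × ℝ → ℝ) (I J : DI) : ℝ :=
  ∫ p : ℝ × ℝ, b p * haar I p.1 * haar J p.2

/-- A dyadic rectangle `R = I × J` as a subset of the plane. -/
noncomputable def dRect (R : DI × DI) : Set (ℝ × ℝ) := DI.set R.1 ×ˢ DI.set R.2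

/-- The strong dyadic maximal function `M_s^d`. -/
noncomputable def strongMax (f : ℝ × ℝ → ℝ) (p : ℝ × ℝ) : ℝ :=
  sSup {r : ℝ | ∃ R : DI × DI, p ∈ dRect R ∧
    r = (∫ q in dRect R, |f q|) / (DI.len R.1 * DI.len R.2)}

/-- The enlargement `U = {M_s^d 𝟏_{U₀} ≥ 1/16}` of a set `U₀`. -/
noncomputable def enlarge (U0 : Set (ℝ × ℝ)) : Set (ℝ × ℝ) :=
  {p | (1:ℝ)/16 ≤ strongMax (U0.indicator fun _ => (1:ℝ)) p}

-- basic lemmas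
lemma two_zpow_pos (n : ℤ) : (0:ℝ) < 2 ^ n := zpow_pos (by norm_num) n

lemma DI.set_eq (I : DI) : I.set = Set.Ico ((I.k : ℝ) * (2:ℝ) ^ (-I.n)) (((I.k : ℝ) + 1) * (2:ℝ) ^ (-I.n)) := rfl

lemma halfscale (n : ℤ) : (2:ℝ) ^ (-n) = 2 * (2:ℝ) ^ (-(n+1)) := by
  have h : -n = (-(n+1)) + 1 := by ring
  rw [h, zpow_add_one₀ (by norm_num : (2:ℝ) ≠ 0)]
  ring

lemma DI.left_set (I : DI) :
    (DI.left I).set = Set.Ico ((2*I.k : ℤ) * (2:ℝ) ^ (-(I.n+1)) : ℝ) ((2*I.k+1 : ℤ) * (2:ℝ) ^ (-(I.n+1))) := by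
  unfold DI.set DI.left
  congr 1 <;> push_cast <;> ring

lemma DI.right_set (I : DI) :
    (DI.right I).set = Set.Ico ((2*I.k+1 : ℤ) * (2:ℝ) ^ (-(I.n+1)) : ℝ) ((2*I.k+2 : ℤ) * (2:ℝ) ^ (-(I.n+1))) := by
  unfold DI.set DI.right
  congr 1 <;> push_cast <;> ring

lemma DI.union_halves (I : DI) : (DI.left I).set ∪ (DI.right I).set = I.set := by
  rw [DI.left_set, DI.right_set, DI.set_eq, halfscale I.n]
  rw [Set.Ico_union_Ico_eq_Ico]
  · congr 1 <;> push_cast <;> ring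
  · have := two_zpow_pos (-(I.n+1)); push_cast; nlinarith
  · have := two_zpow_pos (-(I.n+1)); push_cast; nlinarith

lemma DI.disjoint_halves (I : DI) : Disjoint (DI.left I).set (DI.right I).set := by
  rw [DI.left_set, DI.right_set]
  exact Set.Ico_disjoint_Ico_same

lemma DI.left_subset (I : DI) : (DI.left I).set ⊆ I.set := by
  intro x hx; rw [← DI.union_halves I]; exact Or.inl hx

lemma DI.right_subset (I : DI) : (DI.right I).set ⊆ I.set := by
  intro x hx; rw [← DI.union_halves I]; exact Or.inr hx

lemma haar_support {I : DI} {x : ℝ} (h : haar I x ≠ 0) : x ∈ I.set := by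
  unfold haar at h
  by_cases h1 : x ∈ (DI.right I).set
  · exact DI.right_subset I h1
  by_cases h2 : x ∈ (DI.left I).set
  · exact DI.left_subset I h2
  simp [h1, h2] at h

lemma Ico_disj {a b c d : ℝ} (h : b ≤ c) : Disjoint (Set.Ico a b) (Set.Ico c d) := by
  rw [Set.disjoint_left]
  intro x hx hy
  exact absurd (lt_of_lt_of_le hx.2 h) (not_lt.2 hy.1)

/-- Dyadic trichotomy. -/
lemma DI.subset_or_disjoint {I J : DI} (h : I.n ≤ J.n) : J.set ⊆ I.set ∨ Disjoint J.set I.set := by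
  set d : ℕ := (J.n - I.n).toNat with hd
  have hdn : J.n = I.n + d := by simp [hd]; omega
  set M : ℤ := 2 ^ d with hM
  have hMpos : (0:ℤ) < M := by positivity
  have key : (2:ℝ) ^ (-I.n) = (M : ℝ) * (2:ℝ) ^ (-J.n) := by
    rw [hM]
    push_cast
    rw [← zpow_natCast (2:ℝ) d, ← zpow_add₀ (by norm_num : (2:ℝ) ≠ 0)]
    congr 1; omega
  have e := two_zpow_pos (-J.n)
  have hIset : I.set = Set.Ico ((I.k * M : ℤ) * (2:ℝ)^(-J.n)) (((I.k+1) * M : ℤ) * (2:ℝ)^(-J.n)) := by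
    rw [DI.set_eq, key]; congr 1 <;> push_cast <;> ring
  by_cases h1 : I.k * M ≤ J.k
  · by_cases h2 : J.k + 1 ≤ (I.k + 1) * M
    · left
      rw [hIset, DI.set_eq]
      apply Set.Ico_subset_Ico
      · apply mul_le_mul_of_nonneg_right _ e.le
        exact_mod_cast h1
      · have : ((J.k:ℝ) + 1) = ((J.k + 1 : ℤ) : ℝ) := by push_cast; ring
        rw [this]
        apply mul_le_mul_of_nonneg_right _ e.le
        exact_mod_cast h2
    · right
      rw [hIset, DI.set_eq]
      apply (Ico_disj _).symm
      have h3 : ((I.k + 1) * M : ℤ) ≤ J.k := by omega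
      apply mul_le_mul_of_nonneg_right _ e.le
      exact_mod_cast h3
  · right
    rw [hIset, DI.set_eq]
    apply Ico_disj
    have h3 : (J.k + 1 : ℤ) ≤ I.k * M := by omega
    have h4 : ((J.k:ℝ) + 1) = ((J.k + 1 : ℤ) : ℝ) := by push_cast; ring
    rw [h4]
    apply mul_le_mul_of_nonneg_right _ e.le
    exact_mod_cast h3

lemma haar_eq_indicator (I : DI) : haar I = fun x =>
    Real.sqrt ((2:ℝ) ^ I.n) *
      ((DI.right I).set.indicator (fun _ => (1:ℝ)) x - (DI.left I).set.indicator (fun _ => (1:ℝ)) x) := by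
  funext x
  unfold haar
  by_cases h1 : x ∈ (DI.right I).set
  · have h2 : x ∉ (DI.left I).set := fun h2 =>
      (DI.disjoint_halves I).le_bot ⟨h2, h1⟩
    simp [h1, h2]
  · by_cases h2 : x ∈ (DI.left I).set <;> simp [h1, h2]

lemma measurableSet_set (I : DI) : MeasurableSet I.set := measurableSet_Ico

lemma haar_integrable (I : DI) : Integrable (haar I) := by
  rw [haar_eq_indicator]
  apply Integrable.const_mul
  apply Integrable.sub <;>
  · rw [integrable_indicator_iff (measurableSet_set _)]
    exact integrableOn_const (by rw [DI.set_eq, Real.volume_Ico]; exact ENNReal.ofReal_ne_top)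

lemma haar_measurable (I : DI) : Measurable (haar I) := by
  rw [haar_eq_indicator]
  apply Measurable.const_mul
  exact ((measurable_const.indicator (measurableSet_set _)).sub
    (measurable_const.indicator (measurableSet_set _)))

lemma haar_bound (I : DI) (x : ℝ) : ‖haar I x‖ ≤ Real.sqrt ((2:ℝ) ^ I.n) := by
  unfold haar
  rw [norm_mul, Real.norm_eq_abs (Real.sqrt _), abs_of_nonneg (Real.sqrt_nonneg _)]
  have : ‖(if x ∈ (DI.right I).set then (1:ℝ) else if x ∈ (DI.left I).set then -1 else 0)‖ ≤ 1 := by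
    split_ifs <;> simp
  nlinarith [Real.sqrt_nonneg ((2:ℝ) ^ I.n)]

lemma haar_mul_integrable (I J : DI) : Integrable (fun x => haar I x * haar J x) :=
  (haar_integrable J).bdd_mul (haar_measurable I).aestronglyMeasurable
    (ae_of_all _ (haar_bound I))

lemma vol_set (I : DI) : (volume I.set).toReal = (2:ℝ) ^ (-I.n) := by
  rw [DI.set_eq, Real.volume_Ico, ENNReal.toReal_ofReal]
  · ring_nf
  · have := two_zpow_pos (-I.n); nlinarith

lemma integral_indicator_one (I : DI) :
    ∫ x, I.set.indicator (fun _ => (1:ℝ)) x = (2:ℝ) ^ (-I.n) := by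
  rw [MeasureTheory.integral_indicator_const _ (measurableSet_set I), measureReal_def, vol_set]
  simp

lemma integral_haar (I : DI) : ∫ x, haar I x = 0 := by
  rw [haar_eq_indicator]
  rw [integral_const_mul]
  have hint : ∀ J : DI, Integrable (J.set.indicator (fun _ => (1:ℝ))) := by
    intro J
    rw [integrable_indicator_iff (measurableSet_set _)]
    exact integrableOn_const (by rw [DI.set_eq, Real.volume_Ico]; exact ENNReal.ofReal_ne_top)
  rw [MeasureTheory.integral_sub (hint _) (hint _), _root_.integral_indicator_one, _root_.integral_indicator_one]
  simp [DI.right, DI.left]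

lemma haar_sq (I : DI) (x : ℝ) :
    haar I x * haar I x = (2:ℝ) ^ I.n * I.set.indicator (fun _ => (1:ℝ)) x := by
  unfold haar
  by_cases h1 : x ∈ (DI.right I).set
  · have hx : x ∈ I.set := DI.right_subset I h1
    simp only [h1, if_true, Set.indicator, hx, mul_one]
    have hs : Real.sqrt ((2:ℝ) ^ I.n) * Real.sqrt ((2:ℝ) ^ I.n) = (2:ℝ) ^ I.n :=
      Real.mul_self_sqrt (two_zpow_pos I.n).le
    simp [hs]
  · by_cases h2 : x ∈ (DI.left I).set
    · have hx : x ∈ I.set := DI.left_subset I h2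
      simp only [h1, if_false, h2, if_true, Set.indicator, hx]
      have hs : Real.sqrt ((2:ℝ) ^ I.n) * Real.sqrt ((2:ℝ) ^ I.n) = (2:ℝ) ^ I.n :=
        Real.mul_self_sqrt (two_zpow_pos I.n).le
      linear_combination hs
    · have hx : x ∉ I.set := by
        rw [← DI.union_halves]
        rintro (h | h) <;> [exact h2 h; exact h1 h]
      simp [h1, h2, Set.indicator, hx]

lemma integral_haar_sq (I : DI) : ∫ x, haar I x * haar I x = 1 := by
  have : (fun x => haar I x * haar I x)
      = fun x => (2:ℝ) ^ I.n * I.set.indicator (fun _ => (1:ℝ)) x := funext (haar_sq I)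
  rw [this, integral_const_mul, _root_.integral_indicator_one,
    ← zpow_add₀ (by norm_num : (2:ℝ) ≠ 0)]
  simp

lemma sets_disjoint_same_scale {I J : DI} (hn : I.n = J.n) (hk : I.k ≠ J.k) :
    Disjoint I.set J.set := by
  have e := two_zpow_pos (-J.n)
  rcases lt_or_gt_of_ne hk with h | h
  · rw [DI.set_eq, DI.set_eq, hn]
    apply Ico_disj
    apply mul_le_mul_of_nonneg_right _ e.le
    have : (I.k + 1 : ℤ) ≤ J.k := h
    exact_mod_cast this
  · rw [DI.set_eq, DI.set_eq, hn]
    apply (Ico_disj _).symm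
    apply mul_le_mul_of_nonneg_right _ e.le
    have : (J.k + 1 : ℤ) ≤ I.k := h
    exact_mod_cast this

lemma haar_prod_zero_of_disjoint {I J : DI} (h : Disjoint I.set J.set) (x : ℝ) :
    haar I x * haar J x = 0 := by
  by_cases h1 : haar I x = 0
  · rw [h1, zero_mul]
  by_cases h2 : haar J x = 0
  · rw [h2, mul_zero]
  exact absurd (h.le_bot ⟨haar_support h1, haar_support h2⟩) (by simp)

lemma integral_haar_mul_of_lt {I J : DI} (h : I.n < J.n) :
    ∫ x, haar I x * haar J x = 0 := by
  have hl : (DI.left I).n ≤ J.n := by simp [DI.left]; omega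
  have hr : (DI.right I).n ≤ J.n := by simp [DI.right]; omega
  rcases DI.subset_or_disjoint hr with hsub | hdisR
  · -- J ⊆ right half: haar I is +√2^n on J
    have key : (fun x => haar I x * haar J x)
        = fun x => Real.sqrt ((2:ℝ) ^ I.n) * haar J x := by
      funext x
      by_cases h2 : haar J x = 0
      · rw [h2, mul_zero, mul_zero]
      · have hx : x ∈ (DI.right I).set := hsub (haar_support h2)
        unfold haar
        simp only [hx, if_true, mul_one]
    rw [key, integral_const_mul, integral_haar, mul_zero]
  rcases DI.subset_or_disjoint hl with hsub | hdisL
  · have key : (fun x => haar I x * haar J x)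
        = fun x => -Real.sqrt ((2:ℝ) ^ I.n) * haar J x := by
      funext x
      by_cases h2 : haar J x = 0
      · rw [h2, mul_zero, mul_zero]
      · have hx : x ∈ (DI.left I).set := hsub (haar_support h2)
        have hx2 : x ∉ (DI.right I).set := fun hx2 =>
          absurd ((DI.disjoint_halves I).le_bot ⟨hx, hx2⟩) (by simp)
        unfold haar
        simp only [hx, hx2, if_false, if_true]
        ring
    rw [key, integral_const_mul, integral_haar, mul_zero]
  · have hdis : Disjoint I.set J.set := by
      rw [← DI.union_halves]
      exact Set.disjoint_union_left.2 ⟨hdisL.symm, hdisR.symm⟩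
    have : (fun x => haar I x * haar J x) = fun _ => (0:ℝ) :=
      funext (haar_prod_zero_of_disjoint hdis)
    rw [this, integral_zero]

lemma integral_haar_mul (I J : DI) :
    ∫ x, haar I x * haar J x = if I = J then 1 else 0 := by
  by_cases h : I = J
  · rw [if_pos h, h, integral_haar_sq]
  rw [if_neg h]
  rcases lt_trichotomy I.n J.n with hn | hn | hn
  · exact integral_haar_mul_of_lt hn
  · have hk : I.k ≠ J.k := by
      intro hk; exact h (by cases I; cases J; simp_all)
    have : (fun x => haar I x * haar J x) = fun _ => (0:ℝ) :=
      funext (haar_prod_zero_of_disjoint (sets_disjoint_same_scale hn hk))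
    rw [this, integral_zero]
  · have := integral_haar_mul_of_lt hn
    rw [← this]
    congr 1; funext x; ring


lemma hcoef_haar (K I : DI) : hcoef (haar K) I = if K = I then 1 else 0 := by
  rw [hcoef, integral_haar_mul]

lemma hcoef_const_mul (c : ℝ) (f : ℝ → ℝ) (I : DI) :
    hcoef (fun x => c * f x) I = c * hcoef f I := by
  unfold hcoef
  simp_rw [mul_assoc]
  rw [integral_const_mul]

lemma ediv_eq (m : ℤ) : Int.ediv m 2 = m / 2 := rfl

lemma DI.parent_right (K : DI) : (DI.right K).parent = K := by
  unfold DI.parent DI.right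
  cases K with
  | mk n k => simp [ediv_eq] <;> omega

lemma DI.parent_left (K : DI) : (DI.left K).parent = K := by
  unfold DI.parent DI.left
  cases K with
  | mk n k => simp [ediv_eq] <;> omega

lemma DI.right_ne_left (K : DI) : DI.right K ≠ DI.left K := by
  unfold DI.right DI.left
  intro h
  have := congrArg DI.k h
  simp at this <;> omega

lemma DI.child_of_parent {I K : DI} (h : I.parent = K) :
    I = DI.right K ∨ I = DI.left K := by
  cases I with
  | mk n k =>
    cases K with
    | mk m j =>
      unfold DI.parent at h
      simp [ediv_eq] at h
      obtain ⟨h1, h2⟩ := h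
      unfold DI.right DI.left
      simp
      omega

lemma DI.odd_right {K : DI} (h : DI.IsEven K) : ¬ DI.IsEven (DI.right K) := by
  unfold DI.IsEven DI.right at *
  simp only [Int.even_iff] at *
  omega

lemma DI.odd_left {K : DI} (h : DI.IsEven K) : ¬ DI.IsEven (DI.left K) := by
  unfold DI.IsEven DI.left at *
  simp only [Int.even_iff] at *
  omega

lemma DI.even_of_odd_parent {I : DI} (h : ¬ DI.IsEven I) : DI.IsEven I.parent := by
  unfold DI.IsEven DI.parent at *
  simp only [Int.even_iff] at *
  omega

lemma integrableOn_set {b : ℝ → ℝ} (hb : MeasureTheory.LocallyIntegrable b volume) (I : DI) :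
    IntegrableOn b I.set volume := by
  rw [DI.set_eq]
  exact (hb.integrableOn_isCompact isCompact_Icc).mono_set Set.Ico_subset_Icc_self

lemma hcoef_eq {b : ℝ → ℝ} (hb : MeasureTheory.LocallyIntegrable b volume) (K : DI) :
    hcoef b K = Real.sqrt ((2:ℝ)^K.n) *
      ((∫ x in (DI.right K).set, b x) - ∫ x in (DI.left K).set, b x) := by
  have key : (fun x => b x * haar K x) = fun x => Real.sqrt ((2:ℝ)^K.n) *
      ((DI.right K).set.indicator b x - (DI.left K).set.indicator b x) := by
    funext x
    rw [haar_eq_indicator]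
    simp only [Set.indicator]
    split_ifs <;> ring
  rw [hcoef, key, integral_const_mul,
    MeasureTheory.integral_sub
      ((integrable_indicator_iff (measurableSet_set _)).2 (integrableOn_set hb _))
      ((integrable_indicator_iff (measurableSet_set _)).2 (integrableOn_set hb _)),
    MeasureTheory.integral_indicator (measurableSet_set _),
    MeasureTheory.integral_indicator (measurableSet_set _)]

lemma integral_split {b : ℝ → ℝ} (hb : MeasureTheory.LocallyIntegrable b volume) (K : DI) :
    ∫ x in K.set, b x = (∫ x in (DI.left K).set, b x) + ∫ x in (DI.right K).set, b x := by
  rw [← DI.union_halves K,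
    MeasureTheory.setIntegral_union (DI.disjoint_halves K) (measurableSet_set _)
      (integrableOn_set hb _) (integrableOn_set hb _)]

lemma avg_diff_right {b : ℝ → ℝ} (hb : MeasureTheory.LocallyIntegrable b volume) (K : DI) :
    avg b K - avg b (DI.right K) = -1 / Real.sqrt (DI.len K) * hcoef b K := by
  set s := Real.sqrt ((2:ℝ)^K.n) with hsdef
  set t := Real.sqrt ((2:ℝ)^(-K.n)) with htdef
  have ht : (0:ℝ) < t := Real.sqrt_pos.2 (two_zpow_pos _)
  have htt : t * t = (2:ℝ)^(-K.n) := Real.mul_self_sqrt (two_zpow_pos _).le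
  have hst : s * t = 1 := by
    rw [hsdef, htdef, ← Real.sqrt_mul (two_zpow_pos K.n).le]
    have : (2:ℝ)^K.n * 2^(-K.n) = 1 := by
      rw [← zpow_add₀ (by norm_num : (2:ℝ) ≠ 0)]; simp
    rw [this, Real.sqrt_one]
  have hs : s = 1/t := by field_simp at hst ⊢; linarith
  set Am := ∫ x in (DI.left K).set, b x with hAm
  set Ap := ∫ x in (DI.right K).set, b x with hAp
  have h1 : avg b K = (Am + Ap) / (t * t) := by
    rw [avg, integral_split hb, DI.len, htt]
  have h2 : avg b (DI.right K) = Ap / (t * t / 2) := by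
    rw [avg, DI.len, htt]
    congr 2
    unfold DI.right
    simp only
    rw [halfscale K.n]
    ring
  have h3 : hcoef b K = s * (Ap - Am) := hcoef_eq hb K
  rw [h1, h2, h3, DI.len, ← htt, hs]
  field_simp
  simp only [Real.sqrt_sq ht.le, Real.sqrt_mul_self ht.le]
  ring

lemma avg_diff_left {b : ℝ → ℝ} (hb : MeasureTheory.LocallyIntegrable b volume) (K : DI) :
    avg b (DI.left K) - avg b K = -1 / Real.sqrt (DI.len K) * hcoef b K := by
  set s := Real.sqrt ((2:ℝ)^K.n) with hsdef
  set t := Real.sqrt ((2:ℝ)^(-K.n)) with htdef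
  have ht : (0:ℝ) < t := Real.sqrt_pos.2 (two_zpow_pos _)
  have htt : t * t = (2:ℝ)^(-K.n) := Real.mul_self_sqrt (two_zpow_pos _).le
  have hst : s * t = 1 := by
    rw [hsdef, htdef, ← Real.sqrt_mul (two_zpow_pos K.n).le]
    have : (2:ℝ)^K.n * 2^(-K.n) = 1 := by
      rw [← zpow_add₀ (by norm_num : (2:ℝ) ≠ 0)]; simp
    rw [this, Real.sqrt_one]
  have hs : s = 1/t := by field_simp at hst ⊢; linarith
  set Am := ∫ x in (DI.left K).set, b x with hAm
  set Ap := ∫ x in (DI.right K).set, b x with hAp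
  have h1 : avg b K = (Am + Ap) / (t * t) := by
    rw [avg, integral_split hb, DI.len, htt]
  have h2 : avg b (DI.left K) = Am / (t * t / 2) := by
    rw [avg, DI.len, htt]
    congr 2
    unfold DI.left
    simp only
    rw [halfscale K.n]
    ring
  have h3 : hcoef b K = s * (Ap - Am) := hcoef_eq hb K
  rw [h1, h2, h3, DI.len, ← htt, hs]
  field_simp
  simp only [Real.sqrt_sq ht.le, Real.sqrt_mul_self ht.le]
  ring

lemma Dpara_haar (b : ℝ → ℝ) (K : DI) : Dpara b (haar K) = fun x => avg b K * haar K x := by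
  funext x
  rw [Dpara, tsum_eq_single K]
  · rw [hcoef_haar, if_pos rfl, mul_one]
  · intro I hI
    rw [hcoef_haar, if_neg (Ne.symm hI), mul_zero, zero_mul]

lemma shift_smul_haar (c : ℝ) (K : DI) : shift (fun x => c * haar K x) =
    fun x => if DI.IsEven K then c * (haar (DI.right K) x - haar (DI.left K) x) else 0 := by
  funext x
  rw [shift, tsum_eq_single K]
  · rw [hcoef_const_mul, hcoef_haar, if_pos rfl, mul_one]
  · intro I hI
    rw [hcoef_const_mul, hcoef_haar, if_neg (Ne.symm hI), mul_zero, zero_mul]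
    simp

lemma shift_haar (K : DI) : shift (haar K) =
    fun x => if DI.IsEven K then haar (DI.right K) x - haar (DI.left K) x else 0 := by
  have h : haar K = fun x => (1:ℝ) * haar K x := by funext x; rw [one_mul]
  rw [h, shift_smul_haar]
  funext x
  split_ifs <;> simp

lemma hcoef_shift_haar (K I : DI) : hcoef (shift (haar K)) I =
    if DI.IsEven K then
      ((if DI.right K = I then (1:ℝ) else 0) - (if DI.left K = I then 1 else 0)) else 0 := by
  rw [shift_haar, hcoef]
  by_cases hK : DI.IsEven K
  · simp only [hK, if_true]
    simp_rw [sub_mul]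
    rw [MeasureTheory.integral_sub (haar_mul_integrable _ _) (haar_mul_integrable _ _),
      integral_haar_mul, integral_haar_mul]
  · simp only [hK, if_false, zero_mul, integral_zero]

lemma Dpara_shift_haar (b : ℝ → ℝ) (K : DI) : Dpara b (shift (haar K)) = fun x =>
    if DI.IsEven K then
      avg b (DI.right K) * haar (DI.right K) x - avg b (DI.left K) * haar (DI.left K) x
    else 0 := by
  funext x
  rw [Dpara]
  by_cases hK : DI.IsEven K
  · rw [if_pos hK]
    rw [tsum_eq_sum (s := {DI.right K, DI.left K})
      (by
        intro I hI
        simp only [Finset.mem_insert, Finset.mem_singleton, not_or] at hI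
        rw [hcoef_shift_haar, if_pos hK, if_neg (fun h => hI.1 h.symm), if_neg (fun h => hI.2 h.symm), sub_zero, mul_zero, zero_mul])]
    rw [Finset.sum_pair (DI.right_ne_left K)]
    rw [hcoef_shift_haar, hcoef_shift_haar, if_pos hK, if_pos hK, if_pos rfl,
      if_neg (DI.right_ne_left K), if_neg (Ne.symm (DI.right_ne_left K)), if_pos rfl]
    ring
  · rw [if_neg hK]
    have h : ∀ I : DI, avg b I * hcoef (shift (haar K)) I * haar I x = 0 := by
      intro I
      rw [hcoef_shift_haar, if_neg hK, mul_zero, zero_mul]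
    simp only [h]
    exact tsum_zero

lemma rhs_eq (b : ℝ → ℝ) (K : DI) (x : ℝ) :
    (∑' I : DI, if DI.IsEven I then (0:ℝ) else
        (-1) / Real.sqrt (DI.len (DI.parent I)) * hcoef b (DI.parent I) *
          hcoef (haar K) (DI.parent I) * haar I x) =
    if DI.IsEven K then
      (-1) / Real.sqrt (DI.len K) * hcoef b K * (haar (DI.right K) x + haar (DI.left K) x)
    else 0 := by
  by_cases hK : DI.IsEven K
  · rw [if_pos hK]
    rw [tsum_eq_sum (s := {DI.right K, DI.left K})
      (by
        intro I hI
        simp only [Finset.mem_insert, Finset.mem_singleton, not_or] at hI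
        by_cases hIe : DI.IsEven I
        · rw [if_pos hIe]
        rw [if_neg hIe]
        have hne : K ≠ I.parent := by
          intro h
          rcases DI.child_of_parent h.symm with h1 | h1
          · exact hI.1 h1
          · exact hI.2 h1
        rw [hcoef_haar, if_neg hne, mul_zero, zero_mul])]
    rw [Finset.sum_pair (DI.right_ne_left K)]
    rw [if_neg (DI.odd_right hK), if_neg (DI.odd_left hK), DI.parent_right, DI.parent_left,
      hcoef_haar, if_pos rfl]
    ring
  · rw [if_neg hK]
    have h : ∀ I : DI, (if DI.IsEven I then (0:ℝ) else
        (-1) / Real.sqrt (DI.len (DI.parent I)) * hcoef b (DI.parent I) *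
          hcoef (haar K) (DI.parent I) * haar I x) = 0 := by
      intro I
      by_cases hIe : DI.IsEven I
      · rw [if_pos hIe]
      rw [if_neg hIe]
      have hne : K ≠ I.parent := by
        intro h
        exact hK (h ▸ DI.even_of_odd_parent hIe)
      rw [hcoef_haar, if_neg hne, mul_zero, zero_mul]
    simp only [h]
    exact tsum_zero


/-- **Commutator of the shift with the paraproduct `D(b,·)`:**
`T D(b,f) - D(b,Tf) = ∑_{I odd} (-1/|Î|^{1/2}) (b, h_Î)(f, h_Î) h_I`,
verified on Haar test functions `f = h_K`. -/
theorem stmt5 (b : ℝ → ℝ) (hb : MeasureTheory.LocallyIntegrable b volume) (K : DI) :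
    (fun x => shift (Dpara b (haar K)) x - Dpara b (shift (haar K)) x) =
      fun x => ∑' I : DI, if DI.IsEven I then 0 else
        (-1) / Real.sqrt (DI.len (DI.parent I)) * hcoef b (DI.parent I) *
          hcoef (haar K) (DI.parent I) * haar I x := by
  funext x
  rw [rhs_eq, Dpara_haar, shift_smul_haar, Dpara_shift_haar]
  by_cases hK : DI.IsEven K
  · simp only [hK, if_true]
    have hr := avg_diff_right hb K
    have hl := avg_diff_left hb K
    linear_combination (haar (DI.right K) x) * hr + (haar (DI.left K) x) * hl
  · simp only [hK, if_false]
    ring
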